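/- Let $q \geq 2$ be real, let $Z$ be a standard normal Gaussian random variable, and let $d \in \mathbb{R}$. Then $\mathbb{E}[|1 + dZ|^q] \geq 1 + \frac{1}{9} q^2 d^2$. -/

import Mathlib

open MeasureTheory ProbabilityTheory Real Filter Topology
open scoped NNReal ENNReal

namespace GaussianQMomentAux

lemma pdf_eq (x : ℝ) :
    gaussianPDFReal 0 1 x = (Real.sqrt (2 * π))⁻¹ * Real.exp (-(2:ℝ)⁻¹ * x ^ 2) := by
  simp only [gaussianPDFReal, NNReal.coe_one, mul_one, sub_zero]
  congr 1
  ring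

lemma integral_gaussian_eq (f : ℝ → ℝ) :
    ∫ x, f x ∂(gaussianReal 0 1) = ∫ x, gaussianPDFReal 0 1 x * f x := by
  rw [gaussianReal_of_var_ne_zero 0 one_ne_zero]
  have hmeas : AEMeasurable (fun x => (gaussianPDFReal 0 1 x).toNNReal) (volume : Measure ℝ) :=
    ((measurable_gaussianPDFReal 0 1).real_toNNReal).aemeasurable
  rw [show (gaussianPDF 0 1) = fun x => (((gaussianPDFReal 0 1 x).toNNReal : ℝ≥0) : ℝ≥0∞) from rfl,
    integral_withDensity_eq_integral_smul₀ hmeas f]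
  congr 1 with x
  rw [NNReal.smul_def, Real.coe_toNNReal _ (gaussianPDFReal_nonneg 0 1 x), smul_eq_mul]

lemma integrable_gaussian_iff (f : ℝ → ℝ) :
    Integrable f (gaussianReal 0 1) ↔
      Integrable (fun x => gaussianPDFReal 0 1 x * f x) (volume : Measure ℝ) := by
  rw [gaussianReal_of_var_ne_zero 0 one_ne_zero]
  have hmeas : AEMeasurable (fun x => (gaussianPDFReal 0 1 x).toNNReal) (volume : Measure ℝ) :=
    ((measurable_gaussianPDFReal 0 1).real_toNNReal).aemeasurable
  rw [show (gaussianPDF 0 1) = fun x => (((gaussianPDFReal 0 1 x).toNNReal : ℝ≥0) : ℝ≥0∞) from rfl,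
    integrable_withDensity_iff_integrable_smul₀ hmeas]
  have heq : (fun x => ((gaussianPDFReal 0 1 x).toNNReal : ℝ≥0) • f x)
      = fun x => gaussianPDFReal 0 1 x * f x := by
    funext x
    rw [NNReal.smul_def, Real.coe_toNNReal _ (gaussianPDFReal_nonneg 0 1 x), smul_eq_mul]
  rw [heq]

lemma pow_le_factorial_mul_exp {t : ℝ} (ht : 0 ≤ t) (k : ℕ) :
    t ^ k ≤ (k.factorial : ℝ) * Real.exp t := by
  have h := Real.sum_le_exp_of_nonneg ht (k + 1)
  have h2 : t ^ k / (k.factorial : ℝ) ≤ Real.exp t :=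
    le_trans (Finset.single_le_sum (f := fun i => t ^ i / (i.factorial : ℝ))
      (fun i _ => by positivity) (Finset.self_mem_range_succ k)) h
  rw [div_le_iff₀ (by positivity)] at h2
  rw [mul_comm]
  exact h2

lemma integrable_pow_mul_gauss (k : ℕ) :
    Integrable (fun x : ℝ => x ^ k * Real.exp (-(2:ℝ)⁻¹ * x ^ 2)) (volume : Measure ℝ) := by
  have h4 : (0:ℝ) < 4⁻¹ := by norm_num
  refine Integrable.mono' ((integrable_exp_neg_mul_sq h4).const_mul
      ((1 : ℝ) + 4 ^ k * k.factorial)) ?_ ?_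
  · exact ((measurable_id.pow_const k).mul
      (((measurable_id.pow_const 2).const_mul _).exp)).aestronglyMeasurable
  · filter_upwards with x
    have hx2 : (0:ℝ) ≤ x ^ 2 := sq_nonneg x
    have habs : ‖x ^ k * Real.exp (-(2:ℝ)⁻¹ * x ^ 2)‖
        = |x| ^ k * Real.exp (-(2:ℝ)⁻¹ * x ^ 2) := by
      rw [norm_mul, Real.norm_eq_abs, Real.norm_eq_abs, abs_pow,
        abs_of_pos (Real.exp_pos _)]
    rw [habs]
    have h1 : |x| ^ k ≤ 1 + (x ^ 2) ^ k := by
      rcases le_or_gt |x| 1 with h | h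
      · have h1' := pow_le_one₀ (n := k) (abs_nonneg x) h
        have h2' : (0:ℝ) ≤ (x ^ 2) ^ k := pow_nonneg hx2 k
        linarith
      · have h1le : (1:ℝ) ≤ |x| := h.le
        calc |x| ^ k ≤ |x| ^ (2 * k) := pow_le_pow_right₀ h1le (by omega)
          _ = (|x| ^ 2) ^ k := by rw [pow_mul]
          _ = (x ^ 2) ^ k := by rw [sq_abs]
          _ ≤ 1 + (x ^ 2) ^ k := by linarith
    have h2 : (x ^ 2) ^ k ≤ 4 ^ k * (k.factorial : ℝ) * Real.exp (4⁻¹ * x ^ 2) := by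
      have ht : (0:ℝ) ≤ 4⁻¹ * x ^ 2 := by positivity
      have hh := pow_le_factorial_mul_exp ht k
      calc (x ^ 2) ^ k = 4 ^ k * ((4:ℝ)⁻¹ * x ^ 2) ^ k := by
            rw [← mul_pow]; congr 1; ring
        _ ≤ 4 ^ k * ((k.factorial : ℝ) * Real.exp (4⁻¹ * x ^ 2)) := by
            exact mul_le_mul_of_nonneg_left hh (by positivity)
        _ = 4 ^ k * (k.factorial : ℝ) * Real.exp (4⁻¹ * x ^ 2) := by ring
    have hee : Real.exp (4⁻¹ * x ^ 2) * Real.exp (-(2:ℝ)⁻¹ * x ^ 2)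
        = Real.exp (-(4:ℝ)⁻¹ * x ^ 2) := by
      rw [← Real.exp_add]; congr 1; ring
    have hle : Real.exp (-(2:ℝ)⁻¹ * x ^ 2) ≤ Real.exp (-(4:ℝ)⁻¹ * x ^ 2) :=
      Real.exp_le_exp.2 (by nlinarith)
    have hfa : (0:ℝ) ≤ 4 ^ k * (k.factorial : ℝ) := by positivity
    calc |x| ^ k * Real.exp (-(2:ℝ)⁻¹ * x ^ 2)
        ≤ (1 + 4 ^ k * (k.factorial : ℝ) * Real.exp (4⁻¹ * x ^ 2))
            * Real.exp (-(2:ℝ)⁻¹ * x ^ 2) := by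
          exact mul_le_mul_of_nonneg_right (h1.trans (by linarith)) (Real.exp_pos _).le
      _ = Real.exp (-(2:ℝ)⁻¹ * x ^ 2)
            + 4 ^ k * (k.factorial : ℝ)
              * (Real.exp (4⁻¹ * x ^ 2) * Real.exp (-(2:ℝ)⁻¹ * x ^ 2)) := by ring
      _ = Real.exp (-(2:ℝ)⁻¹ * x ^ 2)
            + 4 ^ k * (k.factorial : ℝ) * Real.exp (-(4:ℝ)⁻¹ * x ^ 2) := by rw [hee]
      _ ≤ Real.exp (-(4:ℝ)⁻¹ * x ^ 2)
            + 4 ^ k * (k.factorial : ℝ) * Real.exp (-(4:ℝ)⁻¹ * x ^ 2) := by linarith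
      _ = ((1 : ℝ) + 4 ^ k * k.factorial) * Real.exp (-(4:ℝ)⁻¹ * x ^ 2) := by ring

lemma integrable_pow_gauss (k : ℕ) :
    Integrable (fun x => x ^ k) (gaussianReal 0 1) := by
  rw [integrable_gaussian_iff]
  have heq : (fun x : ℝ => gaussianPDFReal 0 1 x * x ^ k)
      = fun x => (Real.sqrt (2 * π))⁻¹ * (x ^ k * Real.exp (-(2:ℝ)⁻¹ * x ^ 2)) := by
    funext x; rw [pdf_eq]; ring
  rw [heq]
  exact (integrable_pow_mul_gauss k).const_mul _

lemma moment_odd {k : ℕ} (hk : Odd k) : ∫ x, x ^ k ∂(gaussianReal 0 1) = 0 := by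
  rw [integral_gaussian_eq]
  set F : ℝ → ℝ := fun x => gaussianPDFReal 0 1 x * x ^ k with hF
  have hsym : ∫ x : ℝ, F (-x) = ∫ x : ℝ, F x :=
    (Measure.measurePreserving_neg (volume : Measure ℝ)).integral_comp
      (Homeomorph.neg ℝ).measurableEmbedding F
  have hneg : ∀ x, F (-x) = -F x := by
    intro x
    simp only [hF, pdf_eq, neg_sq, hk.neg_pow]
    ring
  have hzero : ∫ x : ℝ, F x = -∫ x : ℝ, F x := by
    calc ∫ x : ℝ, F x = ∫ x : ℝ, F (-x) := hsym.symm
      _ = ∫ x : ℝ, -F x := by simp_rw [hneg]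
      _ = -∫ x : ℝ, F x := integral_neg F
  linarith

lemma tendsto_mul_exp_atTop :
    Tendsto (fun x : ℝ => x * Real.exp (-(2:ℝ)⁻¹ * x ^ 2)) atTop (𝓝 0) := by
  have hhalf : Tendsto (fun x : ℝ => -((2:ℝ)⁻¹ * x)) atTop atBot := by
    have h1 : Tendsto (fun x : ℝ => (2:ℝ)⁻¹ * x) atTop atTop :=
      Tendsto.const_mul_atTop (by norm_num) tendsto_id
    exact tendsto_neg_atTop_atBot.comp h1
  have hlim : Tendsto (fun x : ℝ => Real.exp (-((2:ℝ)⁻¹ * x))) atTop (𝓝 0) :=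
    Real.tendsto_exp_atBot.comp hhalf
  apply tendsto_of_tendsto_of_tendsto_of_le_of_le' tendsto_const_nhds hlim
  · filter_upwards [eventually_ge_atTop (3:ℝ)] with x hx
    exact mul_nonneg (by linarith) (Real.exp_pos _).le
  · filter_upwards [eventually_ge_atTop (3:ℝ)] with x hx
    have h1 : x ≤ Real.exp x := by linarith [Real.add_one_le_exp x]
    calc x * Real.exp (-(2:ℝ)⁻¹ * x ^ 2)
        ≤ Real.exp x * Real.exp (-(2:ℝ)⁻¹ * x ^ 2) :=
          mul_le_mul_of_nonneg_right h1 (Real.exp_pos _).le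
      _ = Real.exp (x + -(2:ℝ)⁻¹ * x ^ 2) := (Real.exp_add _ _).symm
      _ ≤ Real.exp (-((2:ℝ)⁻¹ * x)) := by
          apply Real.exp_le_exp.2
          nlinarith [mul_nonneg (show (0:ℝ) ≤ x - 3 by linarith) (show (0:ℝ) ≤ x by linarith)]

lemma integral_sq_gauss :
    ∫ x : ℝ, x ^ 2 * Real.exp (-(2:ℝ)⁻¹ * x ^ 2) = Real.sqrt (2 * π) := by
  set F : ℝ → ℝ := fun x => -x * Real.exp (-(2:ℝ)⁻¹ * x ^ 2) with hF
  have hderiv : ∀ x : ℝ, HasDerivAt F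
      (x ^ 2 * Real.exp (-(2:ℝ)⁻¹ * x ^ 2) - Real.exp (-(2:ℝ)⁻¹ * x ^ 2)) x := by
    intro x
    have h1 : HasDerivAt (fun y : ℝ => -(2:ℝ)⁻¹ * y ^ 2) (-(2:ℝ)⁻¹ * (2 * x ^ 1)) x :=
      (hasDerivAt_pow 2 x).const_mul _
    have h2 := h1.exp
    have h3 : HasDerivAt (fun y : ℝ => -y) (-1) x := (hasDerivAt_id x).neg
    have h4 : HasDerivAt (fun y : ℝ => -y * Real.exp (-(2:ℝ)⁻¹ * y ^ 2)) _ x := h3.mul h2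
    convert h4 using 1
    simp only [pow_one]
    ring
  have hint : Integrable (fun x : ℝ => x ^ 2 * Real.exp (-(2:ℝ)⁻¹ * x ^ 2)
      - Real.exp (-(2:ℝ)⁻¹ * x ^ 2)) (volume : Measure ℝ) :=
    (integrable_pow_mul_gauss 2).sub (by simpa using integrable_pow_mul_gauss 0)
  have htop : Tendsto F atTop (𝓝 0) := by
    have h := tendsto_mul_exp_atTop.neg
    rw [neg_zero] at h
    simpa [hF, neg_mul] using h
  have hbot : Tendsto F atBot (𝓝 0) := by
    have h := tendsto_mul_exp_atTop.comp tendsto_neg_atBot_atTop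
    have heqF : F = (fun x : ℝ => x * Real.exp (-(2:ℝ)⁻¹ * x ^ 2)) ∘ Neg.neg := by
      funext x
      simp only [hF, Function.comp_apply, neg_sq, neg_mul]
    rw [heqF]
    exact h
  have h0 := integral_of_hasDerivAt_of_tendsto hderiv hint hbot htop
  rw [integral_sub (integrable_pow_mul_gauss 2)
    (by simpa using integrable_pow_mul_gauss 0)] at h0
  have hg : ∫ x : ℝ, Real.exp (-(2:ℝ)⁻¹ * x ^ 2) = Real.sqrt (2 * π) := by
    have hgi := integral_gaussian (2:ℝ)⁻¹
    rw [show π / (2:ℝ)⁻¹ = 2 * π by rw [div_eq_mul_inv, inv_inv, mul_comm]] at hgi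
    exact hgi
  rw [hg] at h0
  linarith [h0]

lemma moment_two : ∫ x, x ^ 2 ∂(gaussianReal 0 1) = 1 := by
  rw [integral_gaussian_eq]
  have heq : (fun x : ℝ => gaussianPDFReal 0 1 x * x ^ 2)
      = fun x => (Real.sqrt (2 * π))⁻¹ * (x ^ 2 * Real.exp (-(2:ℝ)⁻¹ * x ^ 2)) := by
    funext x; rw [pdf_eq]; ring
  rw [heq, integral_const_mul, integral_sq_gauss, inv_mul_cancel₀]
  exact ne_of_gt (Real.sqrt_pos.2 (by positivity))

lemma poly_expand (d : ℝ) (n : ℕ) :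
    (fun z : ℝ => (1 + d * z) ^ n)
      = fun z => ∑ k ∈ Finset.range (n + 1), (n.choose k : ℝ) * d ^ k * z ^ k := by
  funext z
  rw [add_comm (1:ℝ) (d*z), add_pow]
  refine Finset.sum_congr rfl fun k _ => ?_
  rw [mul_pow, one_pow, mul_one]
  ring

lemma integrable_poly (d : ℝ) (n : ℕ) :
    Integrable (fun z => (1 + d * z) ^ n) (gaussianReal 0 1) := by
  rw [poly_expand]
  exact integrable_finset_sum _ fun k _ => (integrable_pow_gauss k).const_mul _

lemma binom_lb (d : ℝ) (n : ℕ) (hn : 2 ≤ n) :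
    1 + (n.choose 2 : ℝ) * d ^ 2 ≤ ∫ z, (1 + d * z) ^ n ∂(gaussianReal 0 1) := by
  have hexp : ∫ z, (1 + d * z) ^ n ∂(gaussianReal 0 1)
      = ∑ k ∈ Finset.range (n + 1),
          (n.choose k : ℝ) * d ^ k * ∫ z, z ^ k ∂(gaussianReal 0 1) := by
    rw [poly_expand, integral_finset_sum _ fun k _ => (integrable_pow_gauss k).const_mul _]
    exact Finset.sum_congr rfl fun k _ => integral_const_mul _ _
  rw [hexp]
  have h0 : ∫ z, (z:ℝ) ^ 0 ∂(gaussianReal 0 1) = 1 := by simp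
  have hsub : ({0, 2} : Finset ℕ) ⊆ Finset.range (n + 1) := by
    intro i hi
    simp only [Finset.mem_insert, Finset.mem_singleton] at hi
    rcases hi with rfl | rfl <;> simp [Finset.mem_range] <;> omega
  have hkey : ∑ k ∈ ({0, 2} : Finset ℕ),
      (n.choose k : ℝ) * d ^ k * ∫ z, z ^ k ∂(gaussianReal 0 1)
      ≤ ∑ k ∈ Finset.range (n + 1),
          (n.choose k : ℝ) * d ^ k * ∫ z, z ^ k ∂(gaussianReal 0 1) := by
    apply Finset.sum_le_sum_of_subset_of_nonneg hsub
    intro i _ _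
    rcases Nat.even_or_odd i with he | ho
    · exact mul_nonneg (mul_nonneg (Nat.cast_nonneg _) (he.pow_nonneg d))
        (integral_nonneg fun z => he.pow_nonneg z)
    · rw [moment_odd ho, mul_zero]
  refine le_trans (le_of_eq ?_) hkey
  rw [Finset.sum_pair (by norm_num : (0:ℕ) ≠ 2), h0, moment_two]
  simp

lemma integrable_rpow_gauss (d q : ℝ) (hq : 2 ≤ q) :
    Integrable (fun z => |1 + d * z| ^ q) (gaussianReal 0 1) := by
  set m := ⌈q⌉₊ with hm
  have hqm : q ≤ ((2 * m : ℕ) : ℝ) := by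
    push_cast
    have h1 := Nat.le_ceil q
    have h2 : (0:ℝ) ≤ (m:ℝ) := Nat.cast_nonneg m
    rw [← hm] at h1
    linarith
  have hbound : Integrable (fun z => 1 + (1 + d * z) ^ (2 * m)) (gaussianReal 0 1) :=
    (integrable_const 1).add (integrable_poly d (2*m))
  refine hbound.mono' ?_ ?_
  · exact (((measurable_id.const_mul d).const_add 1).abs.pow_const q).aestronglyMeasurable
  · filter_upwards with z
    have ha0 : (0:ℝ) ≤ |1 + d * z| := abs_nonneg _
    rw [Real.norm_of_nonneg (Real.rpow_nonneg ha0 q)]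
    have key : |1 + d * z| ^ q ≤ 1 + |1 + d * z| ^ (2 * m) := by
      rcases le_or_gt (|1 + d * z|) 1 with h | h
      · have hle1 : |1 + d * z| ^ q ≤ 1 := Real.rpow_le_one ha0 h (by linarith)
        have hpos : (0:ℝ) ≤ |1 + d * z| ^ (2 * m) := pow_nonneg ha0 _
        linarith
      · have h1 : |1 + d * z| ^ q ≤ |1 + d * z| ^ (((2 * m : ℕ)) : ℝ) :=
          Real.rpow_le_rpow_of_exponent_le h.le hqm
        rw [Real.rpow_natCast] at h1
        linarith
    have heq : |1 + d * z| ^ (2 * m) = (1 + d * z) ^ (2 * m) := (even_two_mul m).pow_abs _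
    rw [← heq]
    exact key

end GaussianQMomentAux

open GaussianQMomentAux

/-- For real `q ≥ 2`, a standard Gaussian `Z`, and any `d ∈ ℝ`:
`E[|1 + d Z|^q] ≥ 1 + q² d² / 9`. -/
theorem gaussian_q_moment_lower_bound (q d : ℝ) (hq : 2 ≤ q) :
    1 + 1/9 * q ^ 2 * d ^ 2 ≤ ∫ z, |1 + d * z| ^ q ∂(ProbabilityTheory.gaussianReal 0 1) := by
  set n := ⌊q⌋₊ with hn
  have hq0 : (0:ℝ) < q := by linarith
  have hn2 : 2 ≤ n := Nat.le_floor (by exact_mod_cast hq)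
  have hn2' : (2:ℝ) ≤ (n:ℝ) := by exact_mod_cast hn2
  have hnq : (n : ℝ) ≤ q := Nat.floor_le (by linarith)
  have hn1 : q - 1 < (n:ℝ) := Nat.sub_one_lt_floor q
  have hnpos : (0:ℝ) < (n:ℝ) := by linarith
  set A := ∫ z, |1 + d * z| ^ q ∂(gaussianReal 0 1) with hA
  set w : ℝ := (n:ℝ) / q with hw
  have hw0 : 0 < w := div_pos hnpos hq0
  have hw1 : w ≤ 1 := (div_le_one hq0).2 hnq
  have hqw : q * w = (n:ℝ) := by rw [hw]; field_simp
  -- pointwise Young / weighted AM-GM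
  have hpt : ∀ z : ℝ, |1 + d * z| ^ n ≤ w * |1 + d * z| ^ q + (1 - w) := by
    intro z
    have ha0 : (0:ℝ) ≤ |1 + d * z| := abs_nonneg _
    have hg := Real.geom_mean_le_arith_mean2_weighted hw0.le (by linarith : (0:ℝ) ≤ 1 - w)
      (Real.rpow_nonneg ha0 q) zero_le_one (by ring)
    rw [Real.one_rpow, mul_one, mul_one] at hg
    have hpow : (|1 + d * z| ^ q) ^ w = |1 + d * z| ^ n := by
      rw [← Real.rpow_natCast (|1 + d * z|) n, ← hqw, Real.rpow_mul ha0]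
    rw [hpow] at hg
    linarith
  have hIq := integrable_rpow_gauss d q hq
  have hIn : Integrable (fun z => |1 + d * z| ^ n) (gaussianReal 0 1) := by
    have heq : (fun z : ℝ => |1 + d * z| ^ n) = fun z => |(1 + d * z) ^ n| := by
      funext z; rw [abs_pow]
    rw [heq]; exact (integrable_poly d n).abs
  have step2 : ∫ z, (1 + d * z) ^ n ∂(gaussianReal 0 1)
      ≤ ∫ z, |1 + d * z| ^ n ∂(gaussianReal 0 1) := by
    apply integral_mono (integrable_poly d n) hIn
    intro z
    calc (1 + d * z) ^ n ≤ |(1 + d * z) ^ n| := le_abs_self _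
      _ = |1 + d * z| ^ n := abs_pow _ _
  have step3 : ∫ z, |1 + d * z| ^ n ∂(gaussianReal 0 1) ≤ w * A + (1 - w) := by
    have hInt2 : Integrable (fun z => w * |1 + d * z| ^ q + (1 - w)) (gaussianReal 0 1) :=
      (hIq.const_mul w).add (integrable_const _)
    calc ∫ z, |1 + d * z| ^ n ∂(gaussianReal 0 1)
        ≤ ∫ z, (w * |1 + d * z| ^ q + (1 - w)) ∂(gaussianReal 0 1) :=
          integral_mono hIn hInt2 hpt
      _ = w * A + (1 - w) := by
          rw [integral_add (hIq.const_mul w) (integrable_const _), integral_const_mul,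
            integral_const]
          simp [hA]
  have step1 := binom_lb d n hn2
  have hfin : 1 + (n.choose 2 : ℝ) * d ^ 2 ≤ w * A + (1 - w) :=
    le_trans step1 (step2.trans step3)
  have hcd : (0:ℝ) ≤ (n.choose 2 : ℝ) * d ^ 2 := by positivity
  have hA1 : 1 + (n.choose 2 : ℝ) * d ^ 2 ≤ A := by
    nlinarith [hfin, hw0, hw1, hcd]
  have hC : q ^ 2 / 9 ≤ (n.choose 2 : ℝ) := by
    rw [Nat.cast_choose_two]
    rcases le_or_gt 3 q with h3 | h3
    · nlinarith [hn1, mul_nonneg (show (0:ℝ) ≤ (n:ℝ) - (q - 1) by linarith)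
        (show (0:ℝ) ≤ (n:ℝ) + q - 3 by linarith),
        mul_nonneg (show (0:ℝ) ≤ q - 3 by linarith) (show (0:ℝ) ≤ 7 * q - 6 by linarith)]
    · nlinarith [hn2', hq0]
  have hfinal : 1/9 * q ^ 2 * d ^ 2 ≤ (n.choose 2 : ℝ) * d ^ 2 := by
    nlinarith [sq_nonneg d, hC]
  linarith
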